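/- Fix Seifert data. For every integer ℓ with ℓ > γ one has N(ℓ) ≥ −1. -/
import Mathlib


/-- For any Seifert data, `N(ℓ) ≥ −1` for every integer `ℓ > γ`. -/
theorem stmt_5
    (d : ℕ) (hd : 3 ≤ d) (b₀ : ℤ)
    (α ω : Fin d → ℤ)
    (hω : ∀ i, 0 < ω i ∧ ω i < α i)
    (hcop : ∀ i, IsCoprime (α i) (ω i))
    (e : ℚ) (he : e = -(b₀ : ℚ) + ∑ i, (ω i : ℚ) / (α i : ℚ)) (heneg : e < 0)
    (N : ℤ → ℤ)
    (hN : ∀ ℓ : ℤ, N ℓ = b₀ * ℓ - ∑ i, ⌈((ℓ * ω i : ℤ) : ℚ) / ((α i : ℤ) : ℚ)⌉)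
    (γ : ℚ)
    (hγ : γ = ((d : ℚ) - 2 - ∑ i, 1 / (α i : ℚ)) / |e|) :
    ∀ ℓ : ℤ, γ < (ℓ : ℚ) → -1 ≤ N ℓ := by
  intro ℓ hℓ
  have hαpos : ∀ i, (0:ℤ) < α i := fun i => lt_trans (hω i).1 (hω i).2
  have hαQ : ∀ i, (0:ℚ) < ((α i : ℤ) : ℚ) := fun i => by exact_mod_cast hαpos i
  set S1 : ℚ := ∑ i, (ω i : ℚ) / (α i : ℚ) with hS1
  set S2 : ℚ := ∑ i, 1 / (α i : ℚ) with hS2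
  -- key pointwise bound
  have key : ∀ i : Fin d, (⌈((ℓ * ω i : ℤ) : ℚ) / ((α i : ℤ) : ℚ)⌉ : ℚ) ≤
      (ℓ : ℚ) * ((ω i : ℚ) / (α i : ℚ)) + 1 - 1 / (α i : ℚ) := by
    intro i
    have hα := hαQ i
    set a : ℤ := ℓ * ω i with ha
    set m : ℤ := ⌈(a : ℚ) / ((α i : ℤ) : ℚ)⌉ with hm
    have h1 : (m : ℚ) < (a : ℚ) / ((α i : ℤ) : ℚ) + 1 := Int.ceil_lt_add_one _
    have h2 : (m : ℚ) * ((α i : ℤ) : ℚ) < (a : ℚ) + ((α i : ℤ) : ℚ) := by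
      have := mul_lt_mul_of_pos_right h1 hα
      rwa [add_mul, div_mul_cancel₀ _ (ne_of_gt hα), one_mul] at this
    have h3 : m * α i < a + α i := by exact_mod_cast h2
    have h4 : m * α i ≤ a + α i - 1 := by omega
    have h5 : (m : ℚ) * ((α i : ℤ) : ℚ) ≤ (a : ℚ) + ((α i : ℤ) : ℚ) - 1 := by exact_mod_cast h4
    have h6 : (m : ℚ) ≤ ((a : ℚ) + ((α i : ℤ) : ℚ) - 1) / ((α i : ℤ) : ℚ) :=
      (le_div_iff₀ hα).mpr h5
    calc (m : ℚ) ≤ ((a : ℚ) + ((α i : ℤ) : ℚ) - 1) / ((α i : ℤ) : ℚ) := h6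
      _ = (ℓ : ℚ) * ((ω i : ℚ) / (α i : ℚ)) + 1 - 1 / (α i : ℚ) := by
          have : ((a : ℤ) : ℚ) = (ℓ : ℚ) * (ω i : ℚ) := by push_cast [ha]; ring
          rw [this]; field_simp
  -- sum the bound
  have hsum : ((∑ i, ⌈((ℓ * ω i : ℤ) : ℚ) / ((α i : ℤ) : ℚ)⌉ : ℤ) : ℚ) ≤
      (ℓ : ℚ) * S1 + (d : ℚ) - S2 := by
    rw [Int.cast_sum]
    calc (∑ i, (⌈((ℓ * ω i : ℤ) : ℚ) / ((α i : ℤ) : ℚ)⌉ : ℚ)) ≤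
        ∑ i, ((ℓ : ℚ) * ((ω i : ℚ) / (α i : ℚ)) + 1 - 1 / (α i : ℚ)) :=
          Finset.sum_le_sum fun i _ => key i
      _ = (ℓ : ℚ) * S1 + (d : ℚ) - S2 := by
          rw [hS1, hS2, Finset.mul_sum]
          rw [Finset.sum_sub_distrib, Finset.sum_add_distrib]
          simp
  have hNQ : ((N ℓ : ℤ) : ℚ) = (b₀ : ℚ) * (ℓ : ℚ) -
      ((∑ i, ⌈((ℓ * ω i : ℤ) : ℚ) / ((α i : ℤ) : ℚ)⌉ : ℤ) : ℚ) := by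
    rw [hN ℓ]; push_cast; ring
  have habs : |e| = -e := abs_of_neg heneg
  have hepos : 0 < |e| := abs_pos.mpr (ne_of_lt heneg)
  have hγe : |e| * γ = (d : ℚ) - 2 - S2 := by
    rw [hγ, hS2, mul_div_cancel₀ _ (ne_of_gt hepos)]
  have hlt : |e| * γ < |e| * (ℓ : ℚ) := mul_lt_mul_of_pos_left hℓ hepos
  have hel : (b₀ : ℚ) * (ℓ : ℚ) - (ℓ : ℚ) * S1 = |e| * (ℓ : ℚ) := by
    rw [habs, he, hS1]; ring
  have hfin : (-2 : ℚ) < ((N ℓ : ℤ) : ℚ) := by linarith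
  have : (-2 : ℤ) < N ℓ := by exact_mod_cast hfin
  omega
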